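/- Assume Properties 3 and 4. For every resting-state transition from a multiset A = {a_1, a_2} of resting complexes to a multiset B of resting complexes, there exists a condensed reaction (Â, B̂) of the condensed reaction network such that A ~ Â and B ~ B̂ (in particular Â = {SCC(a_1), SCC(a_2)}). -/

import Mathlib

/-- A reaction: a pair (reactants, products) of finite multisets of complexes. -/
abbrev Rxn (C : Type*) := Multiset C × Multiset C

variable {C : Type*}

/-- Edge of the fast-reaction digraph Γ: a fast (1,1) reaction ({x}, {y}) in R. -/
def FastEdge (R : Set (Rxn C)) (x y : C) : Prop :=
  ((({x} : Multiset C), ({y} : Multiset C)) : Rxn C) ∈ R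

/-- Reachability along Γ. -/
def Reach (R : Set (Rxn C)) : C → C → Prop :=
  Relation.ReflTransGen (FastEdge R)

/-- The strongly connected component of Γ containing x. -/
def scc (R : Set (Rxn C)) (x : C) : Set C :=
  {y | Reach R x y ∧ Reach R y x}

/-- Q is a resting set: an SCC of Γ all of whose outgoing fast reactions stay in Q. -/
def IsRestingSet (R : Set (Rxn C)) (Q : Set C) : Prop :=
  (∃ x, Q = scc R x) ∧
    ∀ r ∈ R, r.1.card = 1 → (∀ a ∈ r.1, a ∈ Q) → ∀ b ∈ r.2, b ∈ Q

/-- x is a resting complex: a member of some resting set. -/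
def RestingComplex (R : Set (Rxn C)) (x : C) : Prop :=
  ∃ Q, IsRestingSet R Q ∧ x ∈ Q

/-- One step of a fast transition: replace one occurrence of x by the products of a
fast reaction ({x}, P) ∈ R. -/
def FastStep (R : Set (Rxn C)) (M N : Multiset C) : Prop :=
  ∃ (x : C) (P M' : Multiset C),
    ((({x} : Multiset C), P) : Rxn C) ∈ R ∧ M = x ::ₘ M' ∧ N = P + M'

/-- A fast transition: finitely many fast steps. -/
def FastTransition (R : Set (Rxn C)) : Multiset C → Multiset C → Prop :=
  Relation.ReflTransGen (FastStep R)

/-- The fate predicate Fate(x, F), for x a complex and F a finite multiset of resting sets. -/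
inductive Fate (R : Set (Rxn C)) : C → Multiset (Set C) → Prop
  | resting (x : C) (h : IsRestingSet R (scc R x)) :
      Fate R x {scc R x}
  | step (x a : C) (l : List (C × Multiset (Set C)))
      (hnr : ¬ IsRestingSet R (scc R x))
      (ha : a ∈ scc R x)
      (hr : ((({a} : Multiset C), (↑(l.map Prod.fst) : Multiset C)) : Rxn C) ∈ R)
      (hout : ∃ b ∈ l.map Prod.fst, b ∉ scc R x)
      (hf : ∀ p ∈ l, Fate R p.1 p.2) :
      Fate R x (l.map Prod.snd).sum

/-- B ~ F : the multiset B of complexes represents the multiset F of resting sets,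
i.e. there is a bijective matching pairing each b ∈ B with a Q ∈ F with b ∈ Q. -/
def Represents (B : Multiset C) (F : Multiset (Set C)) : Prop :=
  Multiset.Rel (fun b Q => b ∈ Q) B F

/-- F is a fate of the multiset P of complexes: F = F_1 + ... + F_n where
P = {b_1, ..., b_n} and Fate(b_i, F_i) for each i. -/
def FateM (R : Set (Rxn C)) (P : Multiset C) (F : Multiset (Set C)) : Prop :=
  ∃ l : List (C × Multiset (Set C)),
    P = (↑(l.map Prod.fst) : Multiset C) ∧
    F = (l.map Prod.snd).sum ∧
    ∀ p ∈ l, Fate R p.1 p.2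

/-- The condensed reactions: for each slow reaction ({a₁, a₂}, P) ∈ R and each fate F
of P, the condensed reaction ({SCC(a₁), SCC(a₂)}, F). -/
def IsCondensed (R : Set (Rxn C)) (Ahat Bhat : Multiset (Set C)) : Prop :=
  ∃ (a1 a2 : C) (P : Multiset C),
    ((({a1, a2} : Multiset C), P) : Rxn C) ∈ R ∧
    Ahat = ({scc R a1, scc R a2} : Multiset (Set C)) ∧
    FateM R P Bhat

/-- Every reaction in R is fast (unimolecular) or slow (bimolecular). -/
def FastOrSlow (R : Set (Rxn C)) : Prop :=
  ∀ r ∈ R, r.1.card = 1 ∨ r.1.card = 2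

/-- Reactants and products of every reaction are nonempty. -/
def NonemptyRxns (R : Set (Rxn C)) : Prop :=
  ∀ r ∈ R, r.1 ≠ 0 ∧ r.2 ≠ 0

/-- Property 3: every finite cyclic sequence of fast reactions, in which each reaction
consumes a product of the previous one (cyclically), consists of (1,1) reactions only. -/
def Prop3 (R : Set (Rxn C)) : Prop :=
  ∀ (n : ℕ) (hn : 0 < n) (r : Fin n → Rxn C),
    (∀ i, r i ∈ R ∧ (r i).1.card = 1) →
    (∀ i : Fin n, ∀ a ∈ (r ⟨(i.1 + 1) % n, Nat.mod_lt _ hn⟩).1, a ∈ (r i).2) →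
    ∀ i, (r i).2.card = 1

/-- Property 4: both reactants of every slow reaction are resting complexes. -/
def Prop4 (R : Set (Rxn C)) : Prop :=
  ∀ r ∈ R, r.1.card = 2 → ∀ a ∈ r.1, RestingComplex R a

/-- A resting-state transition from {a₁, a₂} to B: a slow reaction ({a₁, a₂}, P) ∈ R
followed by a fast transition from P to B. -/
def RestingTransition (R : Set (Rxn C)) (a1 a2 : C) (B : Multiset C) : Prop :=
  ∃ P : Multiset C, ((({a1, a2} : Multiset C), P) : Rxn C) ∈ R ∧ FastTransition R P B

/-- One step of a sequence of detailed reactions: remove the reactants of some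
reaction in R from the current multiset and add its products. -/
def DetailedStep (R : Set (Rxn C)) (M N : Multiset C) : Prop :=
  ∃ r ∈ R, ∃ M' : Multiset C, M = r.1 + M' ∧ N = r.2 + M'

/-- One step of a sequence of condensed reactions: remove the reactant multiset of a
condensed reaction from the current multiset of resting sets and add its products. -/
def CondensedStep (R : Set (Rxn C)) (M N : Multiset (Set C)) : Prop :=
  ∃ Ahat Bhat M' : Multiset (Set C),
    IsCondensed R Ahat Bhat ∧ M = Ahat + M' ∧ N = Bhat + M'

section AuxLemmas

variable {C : Type*}

lemma mem_scc_self (R : Set (Rxn C)) (x : C) : x ∈ scc R x :=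
  ⟨Relation.ReflTransGen.refl, Relation.ReflTransGen.refl⟩

lemma scc_eq_of_mem {R : Set (Rxn C)} {x y : C} (h : y ∈ scc R x) : scc R x = scc R y := by
  obtain ⟨hxy, hyx⟩ := h
  ext z
  exact ⟨fun h => ⟨hyx.trans h.1, h.2.trans hxy⟩, fun h => ⟨hxy.trans h.1, h.2.trans hyx⟩⟩

lemma resting_scc {R : Set (Rxn C)} {x : C} (h : RestingComplex R x) :
    IsRestingSet R (scc R x) := by
  obtain ⟨Q, ⟨⟨x0, rfl⟩, hclosed⟩, hx⟩ := h
  rw [← scc_eq_of_mem hx]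
  exact ⟨⟨x0, rfl⟩, hclosed⟩

/-- Lemma A: a fast reaction with a product that can reach its reactant is (1,1). -/
lemma card_one_of_reach {R : Set (Rxn C)} (h3 : Prop3 R) {a : C} {P : Multiset C}
    (hr : ((({a} : Multiset C), P) : Rxn C) ∈ R) {y : C} (hy : y ∈ P)
    (hreach : Reach R y a) : Multiset.card P = 1 := by
  obtain ⟨l, hchain, hlast⟩ := List.exists_isChain_cons_of_relationReflTransGen hreach
  set k := l.length with hk
  set v : ℕ → C := fun i => (y :: l).getD i a with hv
  have hlen : (y :: l).length = k + 1 := by simp [hk]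
  have hv0 : v 0 = y := rfl
  have hgetD : ∀ (i : ℕ) (h : i < k + 1), v i = (y :: l).get ⟨i, by omega⟩ := by
    intro i h
    simp only [hv]
    exact List.getD_eq_getElem (l := y :: l) (d := a) (by rw [hlen]; exact h)
  have hvk : v k = a := by
    rw [← hlast, List.getLast_eq_getElem, hgetD k (Nat.lt_succ_self k)]
    congr 1
    all_goals simp [hlen]
  have hc' : List.Chain' (FastEdge R) (y :: l) := hchain
  have hedge : ∀ (i : ℕ), i < k → FastEdge R (v i) (v (i + 1)) := by
    intro i hi
    have := List.isChain_iff_getElem.mp hc' i (by rw [hlen]; omega)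
    rw [hgetD i (by omega), hgetD (i + 1) (by omega)]
    exact this
  set r : Fin (k + 1) → Rxn C := fun i =>
    if i.1 = k then ((({a} : Multiset C), P) : Rxn C)
    else ((({v i.1} : Multiset C), ({v (i.1 + 1)} : Multiset C)) : Rxn C) with hrdef
  have hr1 : ∀ (j : ℕ) (hj : j < k + 1), (r ⟨j, hj⟩).1 =
      (if j = k then ({a} : Multiset C) else ({v j} : Multiset C)) := by
    intro j hj
    by_cases h : j = k
    · simp [hrdef, h]
    · simp [hrdef, h]
  have hr2 : ∀ (j : ℕ) (hj : j < k + 1), (r ⟨j, hj⟩).2 =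
      (if j = k then P else ({v (j + 1)} : Multiset C)) := by
    intro j hj
    by_cases h : j = k
    · simp [hrdef, h]
    · simp [hrdef, h]
  have hmem : ∀ i, r i ∈ R ∧ (r i).1.card = 1 := by
    intro i
    by_cases h : i.1 = k
    · rw [show r i = ((({a} : Multiset C), P) : Rxn C) from by simp [hrdef, h]]
      exact ⟨hr, by simp⟩
    · rw [show r i = ((({v i.1} : Multiset C), ({v (i.1 + 1)} : Multiset C)) : Rxn C) from
        by simp [hrdef, h]]
      exact ⟨hedge i.1 (by have := i.2; omega), by simp⟩
  have hcons : ∀ i : Fin (k + 1),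
      ∀ c ∈ (r ⟨(i.1 + 1) % (k + 1), Nat.mod_lt _ (Nat.succ_pos k)⟩).1, c ∈ (r i).2 := by
    rintro ⟨i, hi⟩ c hc
    rw [hr1] at hc
    rw [hr2]
    by_cases h : i = k
    · have hm : (i + 1) % (k + 1) = 0 := by rw [h]; exact Nat.mod_self _
      rw [hm] at hc
      rw [if_pos h]
      by_cases hk0 : (0 : ℕ) = k
      · rw [if_pos hk0] at hc
        rw [Multiset.mem_singleton] at hc
        have hay : a = y := by rw [← hvk, ← hk0]; exact hv0
        rw [hc, hay]; exact hy
      · rw [if_neg hk0] at hc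
        rw [Multiset.mem_singleton] at hc
        rw [hc, hv0]; exact hy
    · have hik : i < k := by omega
      have hm : (i + 1) % (k + 1) = i + 1 := Nat.mod_eq_of_lt (by omega)
      rw [hm] at hc
      rw [if_neg h]
      by_cases h1 : i + 1 = k
      · rw [if_pos h1] at hc
        rw [Multiset.mem_singleton] at hc
        rw [hc, ← hvk, ← h1]
        exact Multiset.mem_singleton_self _
      · rw [if_neg h1] at hc
        exact hc
  have hfin := h3 (k + 1) (Nat.succ_pos k) r hmem hcons ⟨k, Nat.lt_succ_self k⟩
  rw [hr2 k (Nat.lt_succ_self k), if_pos rfl] at hfin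
  exact hfin

/-- Length-indexed fast transitions. -/
inductive FT (R : Set (Rxn C)) : ℕ → Multiset C → Multiset C → Prop
  | refl (M : Multiset C) : FT R 0 M M
  | head {M M' N : Multiset C} {n : ℕ} (h : FastStep R M M') (h' : FT R n M' N) :
      FT R (n + 1) M N

lemma FT.tail {R : Set (Rxn C)} {n : ℕ} {M M₁ N : Multiset C}
    (h : FT R n M M₁) (hs : FastStep R M₁ N) : FT R (n + 1) M N := by
  induction h with
  | refl M => exact .head hs (.refl _)
  | head h1 h2 ih => exact .head h1 (ih hs)

lemma ft_of_fastTransition {R : Set (Rxn C)} {M N : Multiset C}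
    (h : FastTransition R M N) : ∃ n, FT R n M N := by
  induction h with
  | refl => exact ⟨0, .refl M⟩
  | tail _ hstep ih =>
    obtain ⟨n, hn⟩ := ih
    exact ⟨n + 1, hn.tail hstep⟩

lemma fastTransition_of_ft {R : Set (Rxn C)} {n : ℕ} {M N : Multiset C}
    (h : FT R n M N) : FastTransition R M N := by
  induction h with
  | refl M => exact Relation.ReflTransGen.refl
  | head h1 _ ih => exact Relation.ReflTransGen.head h1 ih

lemma ft_add_decomp {R : Set (Rxn C)} {n : ℕ} {M B : Multiset C} (h : FT R n M B) :
    ∀ P1 P2 : Multiset C, M = P1 + P2 →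
    ∃ n1 n2 B1 B2, n = n1 + n2 ∧ B = B1 + B2 ∧ FT R n1 P1 B1 ∧ FT R n2 P2 B2 := by
  classical
  induction h with
  | refl M => exact fun P1 P2 h => ⟨0, 0, P1, P2, rfl, h, .refl _, .refl _⟩
  | @head M M' N n hs hft ih =>
    rintro P1 P2 rfl
    obtain ⟨x, Q, M'', hxr, hM, hN⟩ := hs
    have hx : x ∈ P1 + P2 := by rw [hM]; exact Multiset.mem_cons_self _ _
    rcases Multiset.mem_add.mp hx with hx1 | hx2
    · have h1 : P1 = x ::ₘ P1.erase x := (Multiset.cons_erase hx1).symm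
      have hM'' : M'' = P1.erase x + P2 := by
        have heq : x ::ₘ (P1.erase x + P2) = x ::ₘ M'' := by
          rw [← Multiset.cons_add, ← h1, hM]
        exact ((Multiset.cons_inj_right x).mp heq).symm
      obtain ⟨n1, n2, B1, B2, hn, hB, hft1, hft2⟩ :=
        ih (Q + P1.erase x) P2 (by rw [hN, hM'', add_assoc])
      exact ⟨n1 + 1, n2, B1, B2, by omega, hB,
        .head ⟨x, Q, P1.erase x, hxr, h1, rfl⟩ hft1, hft2⟩
    · have h1 : P2 = x ::ₘ P2.erase x := (Multiset.cons_erase hx2).symm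
      have hM'' : M'' = P1 + P2.erase x := by
        have heq : x ::ₘ (P1 + P2.erase x) = x ::ₘ M'' := by
          rw [← Multiset.add_cons, ← h1, hM]
        exact ((Multiset.cons_inj_right x).mp heq).symm
      obtain ⟨n1, n2, B1, B2, hn, hB, hft1, hft2⟩ :=
        ih P1 (Q + P2.erase x) (by rw [hN, hM'']; abel)
      exact ⟨n1, n2 + 1, B1, B2, by omega, hB, hft1,
        .head ⟨x, Q, P2.erase x, hxr, h1, rfl⟩ hft2⟩

lemma ft_list_decomp {R : Set (Rxn C)} :
    ∀ (l : List C) {n : ℕ} {B : Multiset C}, FT R n (↑l : Multiset C) B →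
    ∃ bs : List (ℕ × Multiset C),
      List.Forall₂ (fun x p => FT R p.1 ({x} : Multiset C) p.2) l bs ∧
      (bs.map Prod.fst).sum = n ∧ (bs.map Prod.snd).sum = B := by
  intro l
  induction l with
  | nil =>
    intro n B h
    cases h with
    | refl => exact ⟨[], .nil, rfl, rfl⟩
    | head hs _ =>
      obtain ⟨x, Q, M', _, hM, _⟩ := hs
      simp at hM
  | cons a l ih =>
    intro n B h
    have hsplit : (↑(a :: l) : Multiset C) = ({a} : Multiset C) + ↑l := by
      simp [Multiset.singleton_add]
    obtain ⟨n1, n2, B1, B2, hn, hB, h1, h2⟩ := ft_add_decomp h _ _ hsplit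
    obtain ⟨bs, hfa, hns, hBs⟩ := ih h2
    exact ⟨(n1, B1) :: bs, .cons h1 hfa, by simp [hns, hn], by simp [hBs, hB]⟩

/-- Inside a resting set, fast transitions keep singletons in the set. -/
lemma resting_traj {R : Set (Rxn C)} (hne : NonemptyRxns R) (h3 : Prop3 R)
    {x : C} (hres : IsRestingSet R (scc R x)) {b : C} (hb : b ∈ scc R x)
    {B : Multiset C} (h : FastTransition R ({b} : Multiset C) B) :
    ∃ c, B = ({c} : Multiset C) ∧ c ∈ scc R x := by
  induction h with
  | refl => exact ⟨b, rfl, hb⟩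
  | tail _ hstep ih =>
    obtain ⟨c, rfl, hc⟩ := ih
    obtain ⟨x', P, M', hrr, hM, hN⟩ := hstep
    obtain ⟨hx'c, hM'0⟩ := (Multiset.singleton_eq_cons_iff _).mp hM
    subst hx'c
    subst hM'0
    have hPsub : ∀ p ∈ P, p ∈ scc R x := by
      intro p hp
      refine hres.2 _ hrr (by simp) ?_ p hp
      intro a ha
      rw [Multiset.mem_singleton] at ha
      rwa [ha]
    obtain ⟨p, hp⟩ := Multiset.exists_mem_of_ne_zero (hne _ hrr).2
    have hreach : Reach R p c := ((hPsub p hp).2).trans hc.1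
    have hcard := card_one_of_reach h3 hrr hp hreach
    obtain ⟨q, hq⟩ := Multiset.card_eq_one.mp hcard
    have hpq : p = q := by rw [hq, Multiset.mem_singleton] at hp; exact hp
    exact ⟨p, by rw [hN, hq, add_zero, hpq], hPsub p hp⟩

lemma fate_congr {R : Set (Rxn C)} {x x' : C} (h : scc R x = scc R x')
    {F : Multiset (Set C)} (hf : Fate R x F) : Fate R x' F := by
  cases hf with
  | resting _ hres =>
    rw [h]
    exact Fate.resting x' (h ▸ hres)
  | step _ a l hnr ha hrr hout hfl =>
    exact Fate.step x' a l (h ▸ hnr) (h ▸ ha) hrr (h ▸ hout) hfl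

/-- The main per-complex claim. -/
lemma singleton_fate {R : Set (Rxn C)} (hne : NonemptyRxns R) (h3 : Prop3 R) :
    ∀ (n : ℕ) (x : C) (B : Multiset C), FT R n ({x} : Multiset C) B →
      (∀ b ∈ B, RestingComplex R b) →
      ∃ F, Fate R x F ∧ Represents B F := by
  intro n
  induction n using Nat.strong_induction_on with
  | _ n ih =>
  intro x B hft hB
  by_cases hres : IsRestingSet R (scc R x)
  · obtain ⟨c, rfl, hc⟩ := resting_traj hne h3 hres (mem_scc_self R x)
      (fastTransition_of_ft hft)
    exact ⟨{scc R x}, Fate.resting x hres, Multiset.Rel.cons hc Multiset.Rel.zero⟩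
  · cases hft with
    | refl =>
      exact absurd (resting_scc (hB x (Multiset.mem_singleton_self x))) hres
    | @head _ M' _ m hstep hft' =>
      obtain ⟨x', P, M'', hrr, hM, hN⟩ := hstep
      obtain ⟨hx'x, hM''0⟩ := (Multiset.singleton_eq_cons_iff _).mp hM
      subst hx'x
      subst hM''0
      rw [add_zero] at hN
      rw [hN] at hft'
      by_cases hall : ∀ p ∈ P, p ∈ scc R x
      · obtain ⟨p, hp⟩ := Multiset.exists_mem_of_ne_zero (hne _ hrr).2
        have hcard := card_one_of_reach h3 hrr hp (hall p hp).2
        obtain ⟨q, hq⟩ := Multiset.card_eq_one.mp hcard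
        have hpq : p = q := by rw [hq, Multiset.mem_singleton] at hp; exact hp
        subst hpq
        rw [hq] at hft'
        obtain ⟨F, hF, hrep⟩ := ih m (Nat.lt_succ_self m) p B hft' hB
        refine ⟨F, fate_congr ?_ hF, hrep⟩
        exact (scc_eq_of_mem (hall p hp)).symm
      · push_neg at hall
        obtain ⟨p0, hp0P, hp0out⟩ := hall
        have hPl : (↑P.toList : Multiset C) = P := Multiset.coe_toList P
        obtain ⟨bs, hfa, hns, hBs⟩ := ft_list_decomp P.toList (by rw [hPl]; exact hft')
        have hbuild : ∀ (xs : List C) (bss : List (ℕ × Multiset C)),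
            List.Forall₂ (fun x p => FT R p.1 ({x} : Multiset C) p.2) xs bss →
            (bss.map Prod.fst).sum ≤ m →
            (∀ b ∈ (bss.map Prod.snd).sum, RestingComplex R b) →
            ∃ l' : List (C × Multiset (Set C)),
              l'.map Prod.fst = xs ∧
              Multiset.Rel (fun b Q => b ∈ Q) ((bss.map Prod.snd).sum)
                ((l'.map Prod.snd).sum) ∧
              ∀ p ∈ l', Fate R p.1 p.2 := by
          intro xs
          induction xs with
          | nil =>
            intro bss hfa2 _ _
            cases hfa2
            exact ⟨[], rfl, Multiset.Rel.zero, by simp⟩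
          | cons a xs ihx =>
            intro bss hfa2 hle hrest
            cases hfa2 with
            | cons hab hfa' =>
              rename_i pb bs'
              simp only [List.map_cons, List.sum_cons] at hle hrest
              obtain ⟨F1, hF1, hrep1⟩ := ih pb.1 (by omega) a pb.2 hab
                (fun b hb => hrest b (Multiset.mem_add.mpr (Or.inl hb)))
              obtain ⟨l', hl1, hl2, hl3⟩ := ihx bs' hfa' (by omega)
                (fun b hb => hrest b (Multiset.mem_add.mpr (Or.inr hb)))
              refine ⟨(a, F1) :: l', by simp [hl1], ?_, ?_⟩
              · simp only [List.map_cons, List.sum_cons]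
                exact Multiset.Rel.add hrep1 hl2
              · intro p hp
                rcases List.mem_cons.mp hp with rfl | hp'
                · exact hF1
                · exact hl3 _ hp'
        obtain ⟨l', hl1, hl2, hl3⟩ := hbuild P.toList bs hfa (by omega)
          (by rw [hBs]; exact hB)
        refine ⟨(l'.map Prod.snd).sum, ?_, ?_⟩
        · refine Fate.step x x l' hres (mem_scc_self R x) ?_ ?_ hl3
          · rw [hl1, hPl]; exact hrr
          · refine ⟨p0, ?_, hp0out⟩
            rw [hl1]
            exact Multiset.mem_toList.mpr hp0P
        · rw [← hBs]; exact hl2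

lemma multiset_fate {R : Set (Rxn C)} (hne : NonemptyRxns R) (h3 : Prop3 R)
    {P B : Multiset C} (h : FastTransition R P B)
    (hB : ∀ b ∈ B, RestingComplex R b) :
    ∃ F, FateM R P F ∧ Represents B F := by
  obtain ⟨n, hft⟩ := ft_of_fastTransition h
  obtain ⟨bs, hfa, hns, hBs⟩ := ft_list_decomp P.toList
    (by rw [Multiset.coe_toList]; exact hft)
  have hbuild : ∀ (xs : List C) (bss : List (ℕ × Multiset C)),
      List.Forall₂ (fun x p => FT R p.1 ({x} : Multiset C) p.2) xs bss →
      (∀ b ∈ (bss.map Prod.snd).sum, RestingComplex R b) →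
      ∃ l' : List (C × Multiset (Set C)),
        l'.map Prod.fst = xs ∧
        Multiset.Rel (fun b Q => b ∈ Q) ((bss.map Prod.snd).sum) ((l'.map Prod.snd).sum) ∧
        ∀ p ∈ l', Fate R p.1 p.2 := by
    intro xs
    induction xs with
    | nil =>
      intro bss hfa2 _
      cases hfa2
      exact ⟨[], rfl, Multiset.Rel.zero, by simp⟩
    | cons a xs ihx =>
      intro bss hfa2 hrest
      cases hfa2 with
      | cons hab hfa' =>
        rename_i pb bs'
        simp only [List.map_cons, List.sum_cons] at hrest
        obtain ⟨F1, hF1, hrep1⟩ := singleton_fate hne h3 pb.1 a pb.2 hab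
          (fun b hb => hrest b (Multiset.mem_add.mpr (Or.inl hb)))
        obtain ⟨l', hl1, hl2, hl3⟩ := ihx bs' hfa'
          (fun b hb => hrest b (Multiset.mem_add.mpr (Or.inr hb)))
        refine ⟨(a, F1) :: l', by simp [hl1], ?_, ?_⟩
        · simp only [List.map_cons, List.sum_cons]
          exact Multiset.Rel.add hrep1 hl2
        · intro p hp
          rcases List.mem_cons.mp hp with rfl | hp'
          · exact hF1
          · exact hl3 _ hp'
  obtain ⟨l', hl1, hl2, hl3⟩ := hbuild P.toList bs hfa (by rw [hBs]; exact hB)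
  refine ⟨(l'.map Prod.snd).sum, ⟨l', by rw [hl1, Multiset.coe_toList], rfl, hl3⟩, ?_⟩
  rw [← hBs]; exact hl2

end AuxLemmas


/-- Theorem 2 (Detailed reactions map to condensed reactions). -/
theorem detailed_to_condensed {C : Type*} [Fintype C] (R : Set (Rxn C))
    (hRfin : R.Finite) (hne : NonemptyRxns R) (hfs : FastOrSlow R)
    (h3 : Prop3 R) (h4 : Prop4 R)
    (a1 a2 : C) (ha1 : RestingComplex R a1) (ha2 : RestingComplex R a2)
    (B : Multiset C) (hB : ∀ b ∈ B, RestingComplex R b)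
    (hT : RestingTransition R a1 a2 B) :
    ∃ Ahat Bhat : Multiset (Set C),
      IsCondensed R Ahat Bhat ∧
      Ahat = ({scc R a1, scc R a2} : Multiset (Set C)) ∧
      Represents ({a1, a2} : Multiset C) Ahat ∧
      Represents B Bhat := by
  obtain ⟨P, hrP, htr⟩ := hT
  obtain ⟨F, hFateM, hrep⟩ := multiset_fate hne h3 htr hB
  refine ⟨({scc R a1, scc R a2} : Multiset (Set C)), F, ⟨a1, a2, P, hrP, rfl, hFateM⟩, rfl, ?_, hrep⟩
  exact Multiset.Rel.cons (mem_scc_self R a1)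
    (Multiset.Rel.cons (mem_scc_self R a2) Multiset.Rel.zero)
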